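/- Let M ∈ (ℂ[τ])^{m×n}. Then the quotient module ℂ[τ]^{1×n}/⟨M⟩ is torsion free if and only if there exists r ∈ ℕ, r ≤ min(n,m), such that rank(M(t)) = r for all t ∈ ℂ. -/

import Mathlib

open Polynomial

/-- The row module of a polynomial matrix. -/
noncomputable def rowModule {m n : ℕ} (M : Matrix (Fin m) (Fin n) ℂ[X]) :
    Submodule ℂ[X] (Fin n → ℂ[X]) :=
  Submodule.span ℂ[X] (Set.range fun i => M i)

namespace Stmt2Aux

/-- Coordinatewise evaluation as a semilinear map. -/
noncomputable def ev (n : ℕ) (t : ℂ) :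
    (Fin n → ℂ[X]) →ₛₗ[Polynomial.evalRingHom t] (Fin n → ℂ) where
  toFun v := fun j => (v j).eval t
  map_add' u v := by ext j; simp
  map_smul' p v := by ext j; simp [smul_eq_mul]

instance evSurj (t : ℂ) : RingHomSurjective (Polynomial.evalRingHom t) :=
  ⟨fun c => ⟨Polynomial.C c, Polynomial.eval_C⟩⟩

lemma rank_eq_finrank_map {m n : ℕ} (t : ℂ) (M : Matrix (Fin m) (Fin n) ℂ[X]) :
    (M.map (Polynomial.eval t)).rank =
      Module.finrank ℂ (Submodule.map (ev n t) (rowModule M)) := by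
  unfold rowModule
  rw [Matrix.rank_eq_finrank_span_row, Submodule.map_span, ← Set.range_comp]
  rfl

lemma li_ev {n : ℕ} (t : ℂ) (b : Module.Basis (Fin n) ℂ[X] (Fin n → ℂ[X])) :
    LinearIndependent ℂ (fun j => ev n t (b j)) := by
  classical
  set e := Pi.basisFun ℂ[X] (Fin n) with he
  have hinv : Invertible (e.toMatrix b) := e.invertibleToMatrix b
  have hdet : IsUnit (e.toMatrix b).det :=
    ((Matrix.isUnit_iff_isUnit_det _).mp (isUnit_of_invertible _))
  have hA : IsUnit ((e.toMatrix b).map (Polynomial.evalRingHom t)) := by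
    rw [Matrix.isUnit_iff_isUnit_det, ← RingHom.mapMatrix_apply, ← RingHom.map_det]
    exact hdet.map _
  have h2 := Matrix.linearIndependent_cols_iff_isUnit.mpr hA
  have key : (fun j => ev n t (b j)) =
      fun j => (Matrix.transpose ((e.toMatrix b).map (Polynomial.evalRingHom t))) j := by
    funext j
    ext k
    simp [ev, e, Matrix.transpose_apply, Module.Basis.toMatrix_apply, Matrix.map_apply]
  rw [key]
  exact h2

lemma rank_eq_card_filter {m n : ℕ} (M : Matrix (Fin m) (Fin n) ℂ[X]) {n' : ℕ}
    (snf : Module.Basis.SmithNormalForm (rowModule M) (Fin n) n') (t : ℂ) :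
    (M.map (Polynomial.eval t)).rank =
      (Finset.univ.filter (fun i : Fin n' => (snf.a i).eval t ≠ 0)).card := by
  classical
  rw [rank_eq_finrank_map]
  have hN : rowModule M =
      Submodule.span ℂ[X] (Set.range fun i => ((snf.bN i : Fin n → ℂ[X]))) := by
    conv_lhs => rw [← Submodule.map_subtype_top (rowModule M), ← snf.bN.span_eq]
    rw [Submodule.map_span, ← Set.range_comp]
    rfl
  set c : Fin n → (Fin n → ℂ) := fun j => ev n t (snf.bM j) with hc
  set s : Fin n' → ℂ := fun i => (snf.a i).eval t with hs
  set g : Fin n' → (Fin n → ℂ) := fun i => s i • c (snf.f i) with hg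
  have himg : Submodule.map (ev n t) (rowModule M) = Submodule.span ℂ (Set.range g) := by
    rw [hN, Submodule.map_span, ← Set.range_comp]
    have hfun : (⇑(ev n t) ∘ fun i => (snf.bN i : Fin n → ℂ[X])) = g := by
      funext i
      show ev n t (snf.bN i : Fin n → ℂ[X]) = g i
      rw [snf.snf i, map_smulₛₗ]
      rfl
    rw [hfun]
  rw [himg]
  set S : Finset (Fin n') := Finset.univ.filter (fun i => s i ≠ 0) with hS
  have hspan : Submodule.span ℂ (Set.range g) = Submodule.span ℂ (g '' ↑S) := by
    apply le_antisymm
    · rw [Submodule.span_le, Set.range_subset_iff]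
      intro i
      by_cases hi : i ∈ S
      · exact Submodule.subset_span ⟨i, hi, rfl⟩
      · have : s i = 0 := by simpa [hS] using hi
        have : g i = 0 := by simp [hg, this]
        rw [this]; exact Submodule.zero_mem _
    · exact Submodule.span_mono (Set.image_subset_range _ _)
  rw [hspan, Set.image_eq_range]
  have lic : LinearIndependent ℂ (c ∘ snf.f) := (li_ev t snf.bM).comp snf.f snf.f.injective
  have liS : LinearIndependent ℂ (fun i : ↥(↑S : Set (Fin n')) => g ↑i) := by
    have base : LinearIndependent ℂ (fun i : ↥(↑S : Set (Fin n')) => c (snf.f ↑i)) :=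
      lic.comp (fun i : ↥(↑S : Set (Fin n')) => (↑i : Fin n')) Subtype.val_injective
    have w : ↥(↑S : Set (Fin n')) → ℂˣ := fun i =>
      Units.mk0 (s ↑i) (by have := i.2; simpa [hS] using this)
    exact base.units_smul (fun i => Units.mk0 (s ↑i) (by have := i.2; simpa [hS] using this))
  rw [finrank_span_eq_card liS]
  simp

end Stmt2Aux

theorem stmt2 {m n : ℕ} (M : Matrix (Fin m) (Fin n) ℂ[X]) :
    (∀ (p : ℂ[X]) (x : Fin n → ℂ[X]),
        p ≠ 0 → p • x ∈ rowModule M → x ∈ rowModule M) ↔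
    (∃ r : ℕ, r ≤ min n m ∧ ∀ t : ℂ, (M.map (Polynomial.eval t)).rank = r) := by
  classical
  open Stmt2Aux in
  obtain ⟨n', snf⟩ := (rowModule M).smithNormalForm (Pi.basisFun ℂ[X] (Fin n))
  have ha : ∀ i, snf.a i ≠ 0 := by
    intro i hai
    have h0 : (snf.bN i : Fin n → ℂ[X]) = 0 := by rw [snf.snf i, hai, zero_smul]
    exact snf.bN.ne_zero i (Subtype.coe_injective (by simpa using h0))
  constructor
  · intro htf
    have hunit : ∀ i, IsUnit (snf.a i) := by
      intro i
      have hmem : snf.a i • snf.bM (snf.f i) ∈ rowModule M := by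
        rw [← snf.snf i]; exact (snf.bN i).2
      have hx : snf.bM (snf.f i) ∈ rowModule M := htf _ _ (ha i) hmem
      have h2 := snf.repr_apply_embedding_eq_repr_smul
        (m := (⟨snf.bM (snf.f i), hx⟩ : rowModule M)) (i := i)
      have hcoe : ((⟨snf.bM (snf.f i), hx⟩ : rowModule M) : Fin n → ℂ[X])
          = snf.bM (snf.f i) := rfl
      rw [hcoe, Module.Basis.repr_self, Finsupp.single_eq_same] at h2
      have h3 : snf.bN.repr (snf.a i • (⟨snf.bM (snf.f i), hx⟩ : rowModule M)) i
          = snf.a i * snf.bN.repr ⟨snf.bM (snf.f i), hx⟩ i := by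
        rw [map_smul]; rfl
      exact IsUnit.of_mul_eq_one _ ((h2.trans h3)).symm
    have hne : ∀ (t : ℂ) i, (snf.a i).eval t ≠ 0 := by
      intro t i
      obtain ⟨c, hc, hCc⟩ := Polynomial.isUnit_iff.mp (hunit i)
      rw [← hCc, Polynomial.eval_C]
      exact hc.ne_zero
    have hrank : ∀ t : ℂ, (M.map (Polynomial.eval t)).rank = n' := by
      intro t
      rw [rank_eq_card_filter M snf t]
      rw [Finset.filter_true_of_mem (fun i _ => hne t i)]
      simp
    refine ⟨n', le_min ?_ ?_, hrank⟩
    · simpa using Fintype.card_le_of_embedding snf.f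
    · have h1 := hrank 0
      have h2 := (M.map (Polynomial.eval (0:ℂ))).rank_le_card_height
      rw [h1] at h2
      simpa using h2
  · rintro ⟨r, _, hrank⟩
    have hunit : ∀ i, IsUnit (snf.a i) := by
      by_contra h
      push_neg at h
      obtain ⟨i0, hi0⟩ := h
      have hdeg : (snf.a i0).degree ≠ 0 := fun hd =>
        hi0 (Polynomial.isUnit_iff_degree_eq_zero.mpr hd)
      obtain ⟨t0, ht0⟩ := IsAlgClosed.exists_root (snf.a i0) hdeg
      have hprod : (∏ i, snf.a i) ≠ 0 :=
        Finset.prod_ne_zero_iff.mpr fun i _ => ha i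
      obtain ⟨t1, ht1⟩ : ∃ t1 : ℂ, ∀ i, (snf.a i).eval t1 ≠ 0 := by
        obtain ⟨t1, ht1⟩ := Infinite.exists_notMem_finset (∏ i, snf.a i).roots.toFinset
        refine ⟨t1, fun i h0 => ht1 ?_⟩
        rw [Multiset.mem_toFinset, Polynomial.mem_roots hprod]
        rw [Polynomial.IsRoot.def, Polynomial.eval_prod]
        exact Finset.prod_eq_zero (Finset.mem_univ i) h0
      have e1 := (hrank t1).trans (hrank t0).symm
      rw [rank_eq_card_filter M snf t1, rank_eq_card_filter M snf t0] at e1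
      rw [Finset.filter_true_of_mem (fun i _ => ht1 i)] at e1
      have hlt : (Finset.univ.filter (fun i : Fin n' => (snf.a i).eval t0 ≠ 0)).card
          < Finset.univ.card :=
        Finset.card_lt_card (Finset.filter_ssubset.mpr
          ⟨i0, Finset.mem_univ i0, by simpa using ht0⟩)
      omega
    intro p x hp hpx
    have hsub : Submodule.span ℂ[X] (snf.bM '' Set.range snf.f) ≤ rowModule M := by
      rw [Submodule.span_le]
      rintro _ ⟨j, ⟨i, rfl⟩, rfl⟩
      obtain ⟨u, hu⟩ := hunit i
      have heq : snf.bM (snf.f i) = (↑u⁻¹ : ℂ[X]) • (snf.bN i : Fin n → ℂ[X]) := by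
        rw [snf.snf i, ← hu, smul_smul]
        simp
      rw [heq]
      exact Submodule.smul_mem _ _ (snf.bN i).2
    apply hsub
    rw [Module.Basis.mem_span_image]
    intro j hj
    by_contra hjf
    have h0 : snf.bM.repr ((⟨p • x, hpx⟩ : rowModule M) : Fin n → ℂ[X]) j = 0 :=
      snf.repr_eq_zero_of_notMem_range (⟨p • x, hpx⟩ : rowModule M) hjf
    have h1 : snf.bM.repr (p • x) j = p * snf.bM.repr x j := by
      rw [map_smul]; rfl
    have hxj : snf.bM.repr x j ≠ 0 := by simpa using hj
    have hcoe : ((⟨p • x, hpx⟩ : rowModule M) : Fin n → ℂ[X]) = p • x := rfl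
    rw [hcoe, h1] at h0
    rcases mul_eq_zero.mp h0 with h | h
    · exact hp h
    · exact hxj h
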